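/- Let a, b be positive real numbers and let (v₁, v₂, v₃, v₄) ∈ ℂ⁴ be a parallelogram configuration of the linkage Q(a,b,a,b), i.e., |v₂−v₁| = a, |v₃−v₂| = b, and v₂ − v₁ = v₃ − v₄. Then R(V) = ((v₂−v₁)/(v₃−v₂))². In particular |R(V)| = a²/b², and as the configuration varies over all parallelograms, R attains every value on the circle of radius a²/b² centered at 0 (each value being attained by two parallelogram shapes, i.e., the parallelogram circle is mapped 2:1 onto the image circle). -/

import Mathlib

/-- The uniformizer `R(V) = [v₁,v₃;v₂,v₄]` of a planar quadrilateral. -/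
noncomputable def uniformizer (v₁ v₂ v₃ v₄ : ℂ) : ℂ :=
  ((v₂ - v₁) / (v₂ - v₃)) * ((v₄ - v₃) / (v₄ - v₁))

theorem stmt_18 (a b : ℝ) (ha : 0 < a) (hb : 0 < b) :
    (∀ v₁ v₂ v₃ v₄ : ℂ, ‖v₂ - v₁‖ = a → ‖v₃ - v₂‖ = b →
      v₂ - v₁ = v₃ - v₄ →
        uniformizer v₁ v₂ v₃ v₄ = ((v₂ - v₁) / (v₃ - v₂)) ^ 2 ∧
        ‖uniformizer v₁ v₂ v₃ v₄‖ = a ^ 2 / b ^ 2) ∧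
    (∀ w : ℂ, ‖w‖ = a ^ 2 / b ^ 2 →
      (∃ v₁ v₂ v₃ v₄ : ℂ, ‖v₂ - v₁‖ = a ∧ ‖v₃ - v₂‖ = b ∧
        v₂ - v₁ = v₃ - v₄ ∧ uniformizer v₁ v₂ v₃ v₄ = w) ∧
      Set.encard {z : ℂ | ‖z - (a : ℂ)‖ = b ∧
        uniformizer 0 (a : ℂ) z (z - (a : ℂ)) = w} = 2) := by
  have haC : ((a : ℂ)) ≠ 0 := by
    exact_mod_cast ha.ne'
  constructor
  · intro v₁ v₂ v₃ v₄ h1 h2 h3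
    have hq : v₃ - v₂ ≠ 0 := by
      intro h
      rw [h] at h2
      simp at h2
      linarith
    have h23 : v₂ - v₃ ≠ 0 := fun h => hq (by linear_combination -h)
    have h41 : v₄ - v₁ = v₃ - v₂ := by linear_combination h3
    have h43 : v₄ - v₃ = -(v₂ - v₁) := by linear_combination h3
    have key : uniformizer v₁ v₂ v₃ v₄ = ((v₂ - v₁) / (v₃ - v₂)) ^ 2 := by
      unfold uniformizer
      rw [h41, h43]
      field_simp
      ring
    refine ⟨key, ?_⟩
    rw [key, norm_pow, norm_div, h1, h2, div_pow]
  · intro w hw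
    have hw0 : w ≠ 0 := by
      intro h
      rw [h, norm_zero] at hw
      have hpos : (0 : ℝ) < a ^ 2 / b ^ 2 := by positivity
      linarith
    obtain ⟨r, hr⟩ := IsAlgClosed.exists_pow_nat_eq ((a : ℂ) ^ 2 / w) (n := 2) (by norm_num)
    have hr0 : r ≠ 0 := by
      intro h
      rw [h] at hr
      have h0 : (a : ℂ) ^ 2 / w = 0 := by simpa using hr.symm
      rcases div_eq_zero_iff.1 h0 with h' | h'
      · exact haC (pow_eq_zero_iff (by norm_num) |>.1 h')
      · exact hw0 h'
    have habs : ‖r‖ = b := by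
      have h2 : ‖r‖ ^ 2 = b ^ 2 := by
        rw [← norm_pow, hr, norm_div, norm_pow, Complex.norm_real, Real.norm_eq_abs, abs_of_pos ha, hw]
        field_simp
      nlinarith [norm_nonneg r]
    -- key computation for the set
    have hmem : ∀ z : ℂ, (‖z - (a : ℂ)‖ = b ∧
        uniformizer 0 (a : ℂ) z (z - (a : ℂ)) = w) ↔ (z = (a : ℂ) - r ∨ z = (a : ℂ) + r) := by
      intro z
      constructor
      · rintro ⟨hab, hu⟩
        have hz : (a : ℂ) - z ≠ 0 := by
          intro h
          have : z - (a : ℂ) = 0 := by linear_combination -h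
          rw [this] at hab
          simp at hab
          linarith
        have hu' : ((a : ℂ)) ^ 2 / ((a : ℂ) - z) ^ 2 = w := by
          rw [← hu]
          unfold uniformizer
          have hz' : z - (a : ℂ) ≠ 0 := fun h => hz (by linear_combination -h)
          field_simp
          ring
        have heq : ((a : ℂ) - z) ^ 2 = r ^ 2 := by
          have hu'' : (a : ℂ) ^ 2 = w * ((a : ℂ) - z) ^ 2 :=
            (div_eq_iff (pow_ne_zero 2 hz)).1 hu'
          rw [hr, eq_div_iff hw0]
          linear_combination -hu''
        have hfac : (((a : ℂ) - z) - r) * (((a : ℂ) - z) + r) = 0 := by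
          linear_combination heq
        rcases mul_eq_zero.1 hfac with h | h
        · left; linear_combination -h
        · right; linear_combination -h
      · intro hz
        have haz : ((a : ℂ) - z) ^ 2 = r ^ 2 := by
          rcases hz with h | h <;> rw [h] <;> ring
        have hz0 : (a : ℂ) - z ≠ 0 := by
          intro h
          rw [h] at haz
          have h0 : r ^ 2 = 0 := by simpa using haz.symm
          exact hr0 (pow_eq_zero_iff (by norm_num) |>.1 h0)
        constructor
        · have : ‖z - (a : ℂ)‖ = ‖r‖ := by
            rcases hz with h | h <;> rw [h] <;> simp
          rw [this, habs]
        · unfold uniformizer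
          have hz' : z - (a : ℂ) ≠ 0 := fun h => hz0 (by linear_combination -h)
          have : ((a : ℂ)) ^ 2 / ((a : ℂ) - z) ^ 2 = w := by
            rw [haz, hr]
            field_simp
          rw [← this]
          field_simp
          ring
    have hset : {z : ℂ | ‖z - (a : ℂ)‖ = b ∧
        uniformizer 0 (a : ℂ) z (z - (a : ℂ)) = w} = {(a : ℂ) - r, (a : ℂ) + r} := by
      ext z
      simp only [Set.mem_setOf_eq, Set.mem_insert_iff, Set.mem_singleton_iff]
      exact hmem z
    have hne : (a : ℂ) - r ≠ (a : ℂ) + r := by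
      intro h
      apply hr0
      have h2 : (2 : ℂ) * r = 0 := by linear_combination -h
      simpa using h2
    constructor
    · refine ⟨0, (a : ℂ), (a : ℂ) - r, (a : ℂ) - r - (a : ℂ), ?_, ?_, by ring, ?_⟩
      · simp [abs_of_pos ha]
      · have := (hmem ((a : ℂ) - r)).2 (Or.inl rfl)
        simpa using this.1
      · exact ((hmem ((a : ℂ) - r)).2 (Or.inl rfl)).2
    · rw [hset, Set.encard_pair hne]
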